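/- For j ≥ 1 and τ > 0, the scalar function ψ(τ) = φ_j(τz) satisfies the differential equation ψ'(τ) = (z − j/τ)ψ(τ) + 1/((j−1)! τ). -/

import Mathlib

/-- The φ-functions of exponential integrators defined by the integral
representation `φ_j(w) = ∫_0^1 e^{(1−θ)w} θ^{j−1}/(j−1)! dθ` (for `j ≥ 1`). -/
noncomputable def phiInt (j : ℕ) (z : ℂ) : ℂ :=
  ∫ θ in (0:ℝ)..1,
    Complex.exp ((1 - (θ:ℂ)) * z) * (θ:ℂ) ^ (j - 1) / (Nat.factorial (j - 1) : ℂ)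

noncomputable def phiF (j : ℕ) (z : ℂ) (t : ℝ) : ℂ :=
  ∫ s in (0:ℝ)..t,
    Complex.exp (-(s:ℂ) * z) * (s:ℂ) ^ (j - 1) / (Nat.factorial (j - 1) : ℂ)

lemma phiF_cont (j : ℕ) (z : ℂ) :
    Continuous fun s : ℝ =>
      Complex.exp (-(s:ℂ) * z) * (s:ℂ) ^ (j - 1) / (Nat.factorial (j - 1) : ℂ) := by
  fun_prop

lemma phiInt_eq (j : ℕ) (hj : 1 ≤ j) (z : ℂ) (t : ℝ) (ht : 0 < t) :
    phiInt j ((t:ℂ) * z) =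
      Complex.exp ((t:ℂ) * z) * phiF j z t * ((t:ℂ)) ^ (-(j:ℤ)) := by
  have ht' : (t:ℝ) ≠ 0 := ht.ne'
  have htc : (t:ℂ) ≠ 0 := by exact_mod_cast ht'
  set f : ℝ → ℂ := fun s =>
    Complex.exp ((1 - (s:ℂ)/(t:ℂ)) * ((t:ℂ) * z)) * ((s:ℂ)/(t:ℂ)) ^ (j - 1) /
      (Nat.factorial (j - 1) : ℂ) with hf
  have h1 : phiInt j ((t:ℂ) * z) = ∫ θ in (0:ℝ)..1, f (θ * t) := by
    unfold phiInt
    apply intervalIntegral.integral_congr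
    intro θ _
    simp only [hf]
    push_cast
    rw [mul_div_cancel_right₀ _ htc, mul_div_assoc]
  rw [h1, intervalIntegral.integral_comp_mul_right f ht']
  have h2 : ∫ s in (0:ℝ) * t..1 * t, f s =
      (Complex.exp ((t:ℂ) * z) * ((t:ℂ) ^ (j - 1))⁻¹) * phiF j z t := by
    rw [zero_mul, one_mul]
    unfold phiF
    rw [← intervalIntegral.integral_const_mul]
    apply intervalIntegral.integral_congr
    intro s _
    simp only [hf]
    have : (1 - (s:ℂ)/(t:ℂ)) * ((t:ℂ) * z) = (t:ℂ) * z + (-(s:ℂ) * z) := by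
      field_simp; ring
    rw [this, Complex.exp_add, div_pow]
    field_simp
  rw [h2, Complex.real_smul]
  rw [zpow_neg, zpow_natCast]
  have h3 : (t:ℂ) * (t:ℂ) ^ (j - 1) = (t:ℂ) ^ j := by
    rw [← pow_succ']
    congr 1
    omega
  rw [← h3, mul_inv]
  push_cast
  ring

/-- Scalar version of Lemma 4.1: for `j ≥ 1`, `τ > 0` and fixed `z ∈ ℂ`, the function
`ψ(τ) = φ_j(τz)` satisfies `ψ'(τ) = (z − j/τ)ψ(τ) + 1/((j−1)! τ)`. -/
theorem hasDerivAt_phiInt (j : ℕ) (hj : 1 ≤ j) (z : ℂ) (τ : ℝ) (hτ : 0 < τ) :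
    HasDerivAt (fun t : ℝ => phiInt j ((t:ℂ) * z))
      ((z - (j:ℂ)/(τ:ℂ)) * phiInt j ((τ:ℂ) * z) + 1 / ((Nat.factorial (j-1) : ℂ) * (τ:ℂ)))
      τ := by
  obtain ⟨k, rfl⟩ : ∃ k, j = k + 1 := ⟨j - 1, by omega⟩
  simp only [Nat.add_sub_cancel] at *
  have hτ' : (τ:ℝ) ≠ 0 := hτ.ne'
  have hτc : (τ:ℂ) ≠ 0 := by exact_mod_cast hτ'
  have hfac : ((Nat.factorial k : ℂ)) ≠ 0 := by
    exact_mod_cast Nat.factorial_ne_zero k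
  have hg := phiF_cont (k+1) z
  simp only [Nat.add_sub_cancel] at hg
  have hF : HasDerivAt (phiF (k+1) z)
      (Complex.exp (-(τ:ℂ) * z) * (τ:ℂ) ^ k / (Nat.factorial k : ℂ)) τ := by
    exact intervalIntegral.integral_hasDerivAt_right (hg.intervalIntegrable 0 τ)
      (hg.stronglyMeasurableAtFilter _ _) hg.continuousAt
  have hexp : HasDerivAt (fun t : ℝ => Complex.exp ((t:ℂ) * z))
      (Complex.exp ((τ:ℂ) * z) * z) τ :=
    ((hasDerivAt_mul_const z).cexp (x := (τ:ℂ))).comp_ofReal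
  have hpow := (hasDerivAt_zpow (-((k:ℤ)+1)) (τ:ℂ) (Or.inl hτc)).comp_ofReal
  have hprod := (hexp.mul hF).mul hpow
  have hE : Complex.exp (-(τ:ℂ) * z) = (Complex.exp ((τ:ℂ) * z))⁻¹ := by
    rw [← Complex.exp_neg]; ring_nf
  have hz1 : ((τ:ℂ)) ^ (-((k:ℤ)+1)) = ((τ:ℂ) ^ (k+1))⁻¹ := by
    rw [← zpow_natCast (τ:ℂ) (k+1), ← zpow_neg]
    norm_num
  have hz2 : ((τ:ℂ)) ^ (-((k:ℤ)+1) - 1) = ((τ:ℂ) ^ (k+1))⁻¹ * (τ:ℂ)⁻¹ := by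
    rw [zpow_sub_one₀ hτc, hz1]
  rw [hz1, hz2, hE] at hprod
  push_cast at hprod
  have heq : (fun t : ℝ => phiInt (k+1) ((t:ℂ) * z)) =ᶠ[nhds τ]
      fun t : ℝ => Complex.exp ((t:ℂ) * z) * phiF (k+1) z t * ((t:ℂ)) ^ (-((k:ℤ)+1)) := by
    filter_upwards [eventually_gt_nhds hτ] with t ht
    exact phiInt_eq (k+1) (by omega) z t ht
  refine (HasDerivAt.congr_of_eventuallyEq ?_ heq)
  convert hprod using 1
  case e'_4 => rfl
  case e'_8 => rfl
  rw [phiInt_eq (k+1) (by omega) z τ hτ]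
  push_cast
  rw [hz1]
  have hexpne := Complex.exp_ne_zero ((τ:ℂ) * z)
  simp only [Pi.mul_apply]
  field_simp
  ring
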